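/- Let R be a ring and let I be a two-sided ideal of R all of whose elements are nilpotent, such that the quotient ring R/I is semiprime and indecomposable. Then R is strongly indecomposable: every idempotent e of R satisfying (1−e)·r·e = 0 for all r ∈ R is equal to 0 or to 1. -/

import Mathlib

/-- Let `R` be a ring and `I` a two-sided ideal of `R` all of whose elements are nilpotent,
such that the quotient ring `R/I` is semiprime and indecomposable. Then `R` is strongly
indecomposable: every semicentral idempotent of `R` is `0` or `1`. -/
theorem stmt2 {R : Type*} [Ring R] (I : TwoSidedIdeal R)
    (hnil : ∀ x ∈ I, IsNilpotent x)
    (hsemiprime : ∀ J : TwoSidedIdeal I.ringCon.Quotient,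
      (∀ x ∈ J, ∀ y ∈ J, x * y = 0) → J = ⊥)
    (hnontrivial : Nontrivial I.ringCon.Quotient)
    (hindec : ∀ e : I.ringCon.Quotient, e * e = e → (∀ r, e * r = r * e) → e = 0 ∨ e = 1) :
    ∀ e : R, e * e = e → (∀ r : R, (1 - e) * r * e = 0) → e = 0 ∨ e = 1 := by
  intro e he hsc
  set Q := I.ringCon.Quotient
  set ε : Q := (e : Q) with hε
  have hsurj : ∀ q : Q, ∃ r : R, (r : Q) = q := fun q =>
    Quotient.inductionOn' q fun r => ⟨r, rfl⟩
  have hεe : ε * ε = ε := by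
    rw [hε, ← RingCon.coe_mul, he]
  have hz : (1 - ε) * ε = 0 := by rw [sub_mul, one_mul, hεe, sub_self]
  have h2 : (1 - ε) * (1 - ε) = 1 - ε := by
    calc (1 - ε) * (1 - ε) = (1 - ε) - (1 - ε) * ε := by rw [mul_sub, mul_one]
      _ = 1 - ε := by rw [hz, sub_zero]
  -- semicentrality in the quotient
  have hscQ : ∀ q : Q, (1 - ε) * q * ε = 0 := by
    intro q
    obtain ⟨r, rfl⟩ := hsurj q
    rw [hε, ← RingCon.coe_one, ← RingCon.coe_sub, ← RingCon.coe_mul, ← RingCon.coe_mul,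
      hsc r, RingCon.coe_zero]
  -- key consequence: q * ε = ε * q * ε
  have hkey : ∀ q : Q, q * ε = ε * q * ε := by
    intro q
    have := hscQ q
    rw [sub_mul, sub_mul, one_mul, sub_eq_zero] at this
    exact this
  -- the ideal { ε q (1-ε) }
  let J : TwoSidedIdeal Q := TwoSidedIdeal.mk'
    {x : Q | ε * x * (1 - ε) = x}
    (by simp)
    (fun {x y} hx hy => by
      simp only [Set.mem_setOf_eq] at *
      rw [mul_add, add_mul, hx, hy])
    (fun {x} hx => by
      simp only [Set.mem_setOf_eq] at *
      rw [mul_neg, neg_mul, hx])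
    (fun {a x} hx => by
      simp only [Set.mem_setOf_eq] at *
      calc ε * (a * x) * (1 - ε)
          = ε * (a * (ε * x * (1 - ε))) * (1 - ε) := by rw [hx]
        _ = (ε * a * ε) * x * ((1 - ε) * (1 - ε)) := by noncomm_ring
        _ = (a * ε) * x * (1 - ε) := by rw [← hkey a, h2]
        _ = a * (ε * x * (1 - ε)) := by noncomm_ring
        _ = a * x := by rw [hx])
    (fun {x b} hx => by
      simp only [Set.mem_setOf_eq] at *
      have h0 : (1 - ε) * (b * ε) = 0 := by
        rw [hkey b, ← mul_assoc, ← mul_assoc, hz, zero_mul, zero_mul]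
      have h3 : (1 - ε) * b * (1 - ε) = (1 - ε) * b := by
        calc (1 - ε) * b * (1 - ε) = (1 - ε) * b - (1 - ε) * (b * ε) := by
              simp only [mul_sub, mul_one, mul_assoc]
          _ = (1 - ε) * b := by rw [h0, sub_zero]
      calc ε * (x * b) * (1 - ε)
          = ε * ((ε * x * (1 - ε)) * b) * (1 - ε) := by rw [hx]
        _ = (ε * ε) * x * ((1 - ε) * b * (1 - ε)) := by noncomm_ring
        _ = ε * x * ((1 - ε) * b) := by rw [hεe, h3]
        _ = (ε * x * (1 - ε)) * b := by noncomm_ring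
        _ = x * b := by rw [hx])
  have hJ : J = ⊥ := by
    apply hsemiprime
    intro x hx y hy
    rw [TwoSidedIdeal.mem_mk'] at hx hy
    calc x * y = (ε * x * (1 - ε)) * (ε * y * (1 - ε)) := by rw [hx, hy]
      _ = ε * x * (((1 - ε) * ε) * (y * (1 - ε))) := by simp only [mul_assoc]
      _ = 0 := by rw [hz, zero_mul, mul_zero]
  -- hence ε q (1 - ε) = 0 for all q, so ε is central
  have hc : ∀ q : Q, ε * q = q * ε := by
    intro q
    have hmem : ε * q * (1 - ε) ∈ J := by
      show _ ∈ TwoSidedIdeal.mk' _ _ _ _ _ _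
      rw [TwoSidedIdeal.mem_mk']
      simp only [Set.mem_setOf_eq]
      calc ε * (ε * q * (1 - ε)) * (1 - ε)
          = (ε * ε) * q * ((1 - ε) * (1 - ε)) := by noncomm_ring
        _ = ε * q * (1 - ε) := by rw [hεe, h2]
    rw [hJ, TwoSidedIdeal.mem_bot] at hmem
    have h1 : ε * q = ε * q * ε := by
      rw [mul_sub, mul_one, sub_eq_zero] at hmem
      exact hmem
    rw [h1, ← hkey q]
  rcases hindec ε hεe hc with h0 | h1
  · -- e ∈ I, e nilpotent idempotent ⇒ e = 0
    left
    have heI : e ∈ I := by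
      rw [TwoSidedIdeal.mem_iff]
      have : (e : Q) = ((0 : R) : Q) := by rw [RingCon.coe_zero]; exact h0
      exact I.ringCon.eq.mp this
    obtain ⟨n, hn⟩ := hnil e heI
    have hpow : ∀ m : ℕ, e ^ (m + 1) = e := by
      intro m
      induction m with
      | zero => simp
      | succ k ih => rw [pow_succ, ih, he]
    cases n with
    | zero =>
      simp only [pow_zero] at hn
      calc e = 1 * e := (one_mul e).symm
        _ = 0 := by rw [hn, zero_mul]
    | succ k => rw [hpow k] at hn; exact hn
  · -- 1 - e ∈ I, nilpotent idempotent ⇒ 1 - e = 0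
    right
    have hfI : (1 : R) - e ∈ I := by
      rw [TwoSidedIdeal.mem_iff]
      have : ((1 - e : R) : Q) = ((0 : R) : Q) := by
        rw [RingCon.coe_sub, RingCon.coe_one, RingCon.coe_zero, ← hε, h1, sub_self]
      exact I.ringCon.eq.mp this
    obtain ⟨n, hn⟩ := hnil _ hfI
    have hf : (1 - e) * (1 - e) = 1 - e := by
      calc (1 - e) * (1 - e) = 1 - e - (e - e * e) := by noncomm_ring
        _ = 1 - e := by rw [he, sub_self, sub_zero]
    have hpow : ∀ m : ℕ, (1 - e) ^ (m + 1) = 1 - e := by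
      intro m
      induction m with
      | zero => simp
      | succ k ih => rw [pow_succ, ih, hf]
    cases n with
    | zero =>
      simp only [pow_zero] at hn
      calc e = e * 1 := (mul_one e).symm
        _ = 0 := by rw [hn, mul_zero]
        _ = 1 := hn.symm
    | succ k =>
      rw [hpow k] at hn
      exact (sub_eq_zero.mp hn).symm
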